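/- Let h₀ ∈ H with P h₀ = 0, and let h_k := ∑_{i=0}^{k} (P∘R∘P∘R)^i h₀ be the partial sums of the scattering control Neumann series. Let Z := P∘R∘Q + Q∘R∘P and let χ be the orthogonal projection of H onto the closed subspace ker Z. Then Q(R h_k) converges in norm to R(χ h₀) as k → ∞, and the norms ‖Q(R h_k)‖ decrease monotonically to ‖χ h₀‖. -/

import Mathlib

set_option maxHeartbeats 1000000

open Filter Topology

/-- For `h₀` with `P h₀ = 0` and partial sums
`h_k := ∑_{i=0}^{k} (P∘R∘P∘R)^i h₀`, with `Z := P∘R∘Q + Q∘R∘P` (`Q = I − P`) and `χ` the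
orthogonal projection onto `ker Z`, the interior parts `Q (R h_k)` converge in norm to
`R (χ h₀)`, and the norms `‖Q (R h_k)‖` decrease monotonically to `‖χ h₀‖`. -/
theorem stmt11 {H : Type*} [NormedAddCommGroup H] [InnerProductSpace ℂ H] [CompleteSpace H]
    (R P : H →L[ℂ] H)
    (hR : IsSelfAdjoint R) (hR2 : R ∘L R = 1)
    (hP : IsSelfAdjoint P) (hP2 : P ∘L P = P)
    (Z : H →L[ℂ] H)
    (hZ : Z = P ∘L R ∘L ((1 : H →L[ℂ] H) - P) + ((1 : H →L[ℂ] H) - P) ∘L R ∘L P)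
    (χ : H →L[ℂ] H) (hχ : IsSelfAdjoint χ) (hχ2 : χ ∘L χ = χ)
    (hχrange : LinearMap.range (χ : H →ₗ[ℂ] H) = LinearMap.ker (Z : H →ₗ[ℂ] H))
    (h₀ : H) (hh₀ : P h₀ = 0) :
    Tendsto
        (fun k : ℕ =>
          ((1 : H →L[ℂ] H) - P)
            (R (∑ i ∈ Finset.range (k + 1), ((P ∘L R ∘L P ∘L R) ^ i) h₀)))
        atTop (nhds (R (χ h₀))) ∧
      Antitone
        (fun k : ℕ =>
          ‖((1 : H →L[ℂ] H) - P)
            (R (∑ i ∈ Finset.range (k + 1), ((P ∘L R ∘L P ∘L R) ^ i) h₀))‖) ∧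
      Tendsto
        (fun k : ℕ =>
          ‖((1 : H →L[ℂ] H) - P)
            (R (∑ i ∈ Finset.range (k + 1), ((P ∘L R ∘L P ∘L R) ^ i) h₀))‖)
        atTop (nhds ‖χ h₀‖) := by
  set Q : H →L[ℂ] H := (1 : H →L[ℂ] H) - P with hQdef
  set T : H →L[ℂ] H := P ∘L R ∘L P ∘L R with hTdef
  set E : H →L[ℂ] H := Q ∘L R ∘L Q with hEdef
  have hPP : ∀ x, P (P x) = P x := fun x => by
    simpa using DFunLike.congr_fun hP2 x
  have hRR : ∀ x, R (R x) = x := fun x => by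
    simpa using DFunLike.congr_fun hR2 x
  have hQx : ∀ x, Q x = x - P x := fun x => by
    simp [hQdef]
  have hPz : ∀ z, P z = z - Q z := fun z => by rw [hQx]; abel
  have hQQ : ∀ x, Q (Q x) = Q x := fun x => by
    simp [hQx, map_sub, hPP]
  have hPQ : ∀ x, P (Q x) = 0 := fun x => by
    simp [hQx, map_sub, hPP]
  have hQP : ∀ x, Q (P x) = 0 := fun x => by
    rw [hQx, hPP]; abel
  have hQh₀ : Q h₀ = h₀ := by rw [hQx, hh₀, sub_zero]
  have hEapp : ∀ x, E x = Q (R (Q x)) := fun x => rfl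
  have hTapp : ∀ x, T x = P (R (P (R x))) := fun x => rfl
  have hRsym : ∀ x y : H, inner ℂ (R x) y = (inner ℂ x (R y) : ℂ) :=
    ContinuousLinearMap.isSelfAdjoint_iff_isSymmetric.mp hR
  have hPsym : ∀ x y : H, inner ℂ (P x) y = (inner ℂ x (P y) : ℂ) :=
    ContinuousLinearMap.isSelfAdjoint_iff_isSymmetric.mp hP
  have hQsa : IsSelfAdjoint Q := by
    rw [hQdef]; exact (IsSelfAdjoint.one (H →L[ℂ] H)).sub hP
  have hEsa : IsSelfAdjoint E := by
    have h : E = Q * (R * Q) := rfl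
    rw [h, IsSelfAdjoint, star_mul, star_mul, hQsa.star_eq, hR.star_eq, mul_assoc]
  have hEsym : ∀ x y : H, inner ℂ (E x) y = (inner ℂ x (E y) : ℂ) :=
    ContinuousLinearMap.isSelfAdjoint_iff_isSymmetric.mp hEsa
  have hχsym : ∀ x y : H, inner ℂ (E x) y = (inner ℂ x (E y) : ℂ) :=
    ContinuousLinearMap.isSelfAdjoint_iff_isSymmetric.mp hEsa
  -- power symmetry
  have hEpowsym : ∀ (n : ℕ) (x y : H), inner ℂ ((E ^ n) x) y = (inner ℂ x ((E ^ n) y) : ℂ) := by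
    intro n
    induction n with
    | zero => intro x y; simp
    | succ n ih =>
      intro x y
      calc inner ℂ ((E ^ (n+1)) x) y = (inner ℂ ((E ^ n) (E x)) y : ℂ) := by
            rw [pow_succ, ContinuousLinearMap.mul_apply]
        _ = inner ℂ (E x) ((E ^ n) y) := ih _ _
        _ = inner ℂ x (E ((E ^ n) y)) := hEsym _ _
        _ = inner ℂ x ((E ^ (n+1)) y) := by
            rw [← ContinuousLinearMap.mul_apply, ← pow_succ']
  -- Pythagoras and contraction facts
  have hpyth : ∀ x : H, ‖P x‖ ^ 2 + ‖Q x‖ ^ 2 = ‖x‖ ^ 2 := by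
    intro x
    have horth : (inner ℂ (P x) (Q x) : ℂ) = 0 := by
      rw [hPsym, hPQ, inner_zero_right]
    have hsum : P x + Q x = x := by rw [hQx]; abel
    calc ‖P x‖ ^ 2 + ‖Q x‖ ^ 2 = ‖P x + Q x‖ ^ 2 := by
          rw [norm_add_sq (𝕜 := ℂ), horth]; simp
      _ = ‖x‖ ^ 2 := by rw [hsum]
  have hRiso : ∀ x : H, ‖R x‖ = ‖x‖ := by
    intro x
    have h1 : ‖R x‖ ^ 2 = ‖x‖ ^ 2 := by
      rw [← inner_self_eq_norm_sq (𝕜 := ℂ), ← inner_self_eq_norm_sq (𝕜 := ℂ), hRsym, hRR]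
    calc ‖R x‖ = √(‖R x‖ ^ 2) := (Real.sqrt_sq (norm_nonneg _)).symm
      _ = √(‖x‖ ^ 2) := by rw [h1]
      _ = ‖x‖ := Real.sqrt_sq (norm_nonneg _)
  have hQcontr : ∀ x : H, ‖Q x‖ ≤ ‖x‖ := by
    intro x
    have := hpyth x
    nlinarith [norm_nonneg (Q x), norm_nonneg x, sq_nonneg (‖P x‖)]
  have hEcontr : ∀ x : H, ‖E x‖ ≤ ‖x‖ := by
    intro x
    calc ‖E x‖ = ‖Q (R (Q x))‖ := by rw [hEapp]
      _ ≤ ‖R (Q x)‖ := hQcontr _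
      _ = ‖Q x‖ := hRiso _
      _ ≤ ‖x‖ := hQcontr _
  -- structural pointwise identities
  have hQRh₀ : Q (R h₀) = E h₀ := by rw [hEapp, hQh₀]
  have hQRPRQ : ∀ x : H, Q (R (P (R (Q x)))) = Q x - E (E x) := by
    intro x
    rw [hPz (R (Q x))]
    rw [map_sub, map_sub, hRR, hQQ]
    have : E (E x) = Q (R (Q (R (Q x)))) := by
      rw [hEapp, hEapp x, hQQ]
    rw [this]
  have hQRPRh₀ : Q (R (P (R h₀))) = h₀ - E (E h₀) := by
    have := hQRPRQ h₀
    rwa [hQh₀] at this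
  have hA : ∀ z : H, Q (R (P (R (P z)))) = -E (Q (R (P z))) := by
    intro z
    rw [hPz (R (P z))]
    rw [map_sub, map_sub, hRR, hQP]
    have : E (Q (R (P z))) = Q (R (Q (R (P z)))) := by rw [hEapp, hQQ]
    rw [this]
    abel
  -- partial sums
  set s : ℕ → H := fun k => ∑ i ∈ Finset.range (k+1), (T ^ i) h₀ with hs_def
  have hsrec : ∀ k : ℕ, s (k+1) = T (s k) + h₀ := by
    intro k
    show (∑ i ∈ Finset.range (k+1+1), (T ^ i) h₀) = T (∑ i ∈ Finset.range (k+1), (T ^ i) h₀) + h₀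
    rw [← ContinuousLinearMap.sum_apply, ← ContinuousLinearMap.sum_apply, geom_sum_succ,
      ContinuousLinearMap.add_apply, ContinuousLinearMap.mul_apply, ContinuousLinearMap.one_apply]
  have key : ∀ k : ℕ, Q (R (s k)) = (E ^ (2*k+1)) h₀ ∧
      Q (R (P (R (s k)))) = h₀ - (E ^ (2*k+2)) h₀ := by
    intro k
    induction k with
    | zero =>
      have hs0 : s 0 = h₀ := by simp [hs_def]
      constructor
      · rw [hs0, pow_one, hQRh₀]
      · rw [hs0, hQRPRh₀, show 2*0+2 = 2 from rfl, pow_two, ContinuousLinearMap.mul_apply]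
    | succ k ih =>
      have e1 : E ((E ^ (2*k+2)) h₀) = (E ^ (2*k+3)) h₀ := by
        rw [← ContinuousLinearMap.mul_apply, ← pow_succ']
      have e3 : E ((E ^ (2*k+3)) h₀) = (E ^ (2*k+4)) h₀ := by
        rw [← ContinuousLinearMap.mul_apply, ← pow_succ']
      have hQRT : Q (R (T (s k))) = -(E h₀ - (E ^ (2*k+3)) h₀) := by
        rw [hTapp, hA (R (s k)), ih.2, map_sub, e1]
      constructor
      · rw [hsrec k, map_add, map_add, hQRT, hQRh₀, show 2*(k+1)+1 = 2*k+3 by ring]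
        abel
      · rw [hsrec k, map_add, map_add, map_add, map_add]
        have hfirst : Q (R (P (R (T (s k))))) = E (E h₀) - (E ^ (2*k+4)) h₀ := by
          rw [hTapp, hA (R (P (R (s k)))), hA (R (s k)), ih.2]
          rw [map_sub, map_neg, neg_neg, e1, map_sub, e3]
        rw [hfirst, hQRPRh₀, show 2*(k+1)+2 = 2*k+4 by ring]
        abel
  -- sequence of even powers and decreasing norms
  set a : ℕ → H := fun k => (E ^ (2*k)) h₀ with ha_def
  set c : ℕ → ℝ := fun n => ‖(E ^ n) h₀‖ with hc_def
  have hc_nonneg : ∀ n, 0 ≤ c n := fun n => norm_nonneg _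
  have hc_succ : ∀ n, c (n+1) ≤ c n := by
    intro n
    have h1 : (E ^ (n+1)) h₀ = E ((E ^ n) h₀) := by
      rw [pow_succ', ContinuousLinearMap.mul_apply]
    show ‖(E ^ (n+1)) h₀‖ ≤ ‖(E ^ n) h₀‖
    rw [h1]; exact hEcontr _
  have hc_anti : Antitone c := antitone_nat_of_succ_le hc_succ
  have hbdd : BddBelow (Set.range c) := ⟨0, fun x ⟨n, hn⟩ => hn ▸ hc_nonneg n⟩
  set L : ℝ := ⨅ n, c n with hL
  have hcL : Tendsto c atTop (𝓝 L) := tendsto_atTop_ciInf hc_anti hbdd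
  have hLle : ∀ n, L ≤ c n := fun n => ciInf_le hbdd n
  have hL0 : 0 ≤ L := le_ciInf hc_nonneg
  have hinner_aa : ∀ k m : ℕ, RCLike.re (inner ℂ (a k) (a m) : ℂ) = c (k+m) ^ 2 := by
    intro k m
    have h1 : (inner ℂ (a k) (a m) : ℂ) = inner ℂ ((E ^ (k+m)) h₀) ((E ^ (k+m)) h₀) := by
      calc (inner ℂ (a k) (a m) : ℂ)
          = inner ℂ h₀ ((E ^ (2*k)) ((E ^ (2*m)) h₀)) := hEpowsym _ _ _
        _ = inner ℂ h₀ ((E ^ (2*k + 2*m)) h₀) := by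
            rw [← ContinuousLinearMap.mul_apply, ← pow_add]
        _ = inner ℂ h₀ ((E ^ ((k+m) + (k+m))) h₀) := by
            rw [show 2*k+2*m = (k+m)+(k+m) by ring]
        _ = inner ℂ h₀ ((E ^ (k+m)) ((E ^ (k+m)) h₀)) := by
            rw [pow_add, ContinuousLinearMap.mul_apply]
        _ = inner ℂ ((E ^ (k+m)) h₀) ((E ^ (k+m)) h₀) := (hEpowsym _ _ _).symm
    rw [h1, inner_self_eq_norm_sq (𝕜 := ℂ)]
  have hdiff : ∀ k m : ℕ, ‖a k - a m‖ ^ 2 = c (2*k) ^ 2 - 2 * c (k+m) ^ 2 + c (2*m) ^ 2 := by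
    intro k m
    rw [norm_sub_sq (𝕜 := ℂ), hinner_aa]
  have hbound : ∀ k m N : ℕ, N ≤ k → N ≤ m →
      dist (a k) (a m) ≤ Real.sqrt (2 * c (2*N) ^ 2 - 2 * L ^ 2) := by
    intro k m N hk hm
    rw [dist_eq_norm]
    have h2 : ‖a k - a m‖ ^ 2 ≤ 2 * c (2*N) ^ 2 - 2 * L ^ 2 := by
      rw [hdiff k m]
      have l1 : c (2*k) ≤ c (2*N) := hc_anti (by omega)
      have l2 : c (2*m) ≤ c (2*N) := hc_anti (by omega)
      have l3 : L ≤ c (k+m) := hLle _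
      nlinarith [hc_nonneg (2*k), hc_nonneg (2*m), hc_nonneg (k+m), hL0]
    calc ‖a k - a m‖ = Real.sqrt (‖a k - a m‖ ^ 2) := (Real.sqrt_sq (norm_nonneg _)).symm
      _ ≤ Real.sqrt (2 * c (2*N) ^ 2 - 2 * L ^ 2) := Real.sqrt_le_sqrt h2
  have hbtend : Tendsto (fun N => Real.sqrt (2 * c (2*N) ^ 2 - 2 * L ^ 2)) atTop (𝓝 0) := by
    have h2N : Tendsto (fun N : ℕ => 2*N) atTop atTop :=
      tendsto_atTop_atTop.mpr fun b => ⟨b, fun x hx => by omega⟩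
    have hc2N : Tendsto (fun N => c (2*N)) atTop (𝓝 L) := hcL.comp h2N
    have hinside : Tendsto (fun N => 2 * c (2*N) ^ 2 - 2 * L ^ 2) atTop
        (𝓝 (2 * L ^ 2 - 2 * L ^ 2)) :=
      ((hc2N.pow 2).const_mul 2).sub tendsto_const_nhds
    rw [sub_self] at hinside
    have hs := (Real.continuous_sqrt.tendsto 0).comp hinside
    simpa [Function.comp_def] using hs
  have hcauchy : CauchySeq a := cauchySeq_of_le_tendsto_0 _ hbound hbtend
  obtain ⟨y, hy⟩ := cauchySeq_tendsto_of_complete hcauchy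
  have ha_succ : ∀ k, a (k+1) = E (E (a k)) := by
    intro k
    show (E ^ (2*(k+1))) h₀ = E (E ((E ^ (2*k)) h₀))
    rw [show 2*(k+1) = 2*k+1+1 by ring, pow_succ', ContinuousLinearMap.mul_apply,
      pow_succ', ContinuousLinearMap.mul_apply]
  have hE2y : E (E y) = y := by
    have t1 : Tendsto (fun k => a (k+1)) atTop (𝓝 y) := hy.comp (tendsto_add_atTop_nat 1)
    have t2 : Tendsto (fun k => E (E (a k))) atTop (𝓝 (E (E y))) := by
      have := (E.continuous.tendsto (E y)).comp ((E.continuous.tendsto y).comp hy)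
      simpa [Function.comp_def] using this
    rw [funext ha_succ] at t1
    exact tendsto_nhds_unique t2 t1
  -- properties of χ h₀ and identification of the limit
  have hχsym : ∀ x y : H, inner ℂ (χ x) y = (inner ℂ x (χ y) : ℂ) :=
    ContinuousLinearMap.isSelfAdjoint_iff_isSymmetric.mp hχ
  have hχχ : ∀ x, χ (χ x) = χ x := fun x => by simpa using DFunLike.congr_fun hχ2 x
  have hZapp : ∀ x, Z x = P (R (Q x)) + Q (R (P x)) := by
    intro x; rw [hZ]; rfl
  have hZw : Z (χ h₀) = 0 := by
    have hm : χ h₀ ∈ LinearMap.range (χ : H →ₗ[ℂ] H) := ⟨h₀, rfl⟩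
    rw [hχrange] at hm
    exact LinearMap.mem_ker.mp hm
  have hsplit : P (R (Q (χ h₀))) + Q (R (P (χ h₀))) = 0 := by rw [← hZapp]; exact hZw
  have hPRQw : P (R (Q (χ h₀))) = 0 := by
    have h := congrArg P hsplit
    simpa [map_add, hPP, hPQ] using h
  have hQRPw : Q (R (P (χ h₀))) = 0 := by
    have h := hsplit; rw [hPRQw, zero_add] at h; exact h
  have hPwker : Z (P (χ h₀)) = 0 := by
    rw [hZapp, hQP, hPP, hQRPw]; simp
  have hPw : P (χ h₀) = 0 := by
    have hmem : P (χ h₀) ∈ LinearMap.range (χ : H →ₗ[ℂ] H) := by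
      rw [hχrange]; exact LinearMap.mem_ker.mpr hPwker
    obtain ⟨u, hu⟩ := hmem
    have hχPw : χ (P (χ h₀)) = P (χ h₀) := by rw [← hu, ContinuousLinearMap.coe_coe, hχχ]
    have hip : (inner ℂ (P (χ h₀)) (P (χ h₀)) : ℂ) = 0 := by
      calc (inner ℂ (P (χ h₀)) (P (χ h₀)) : ℂ)
          = inner ℂ (χ h₀) (P (P (χ h₀))) := hPsym _ _
        _ = inner ℂ (χ h₀) (P (χ h₀)) := by rw [hPP]
        _ = inner ℂ h₀ (χ (P (χ h₀))) := hχsym _ _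
        _ = inner ℂ h₀ (P (χ h₀)) := by rw [hχPw]
        _ = inner ℂ (P h₀) (χ h₀) := (hPsym _ _).symm
        _ = 0 := by rw [hh₀, inner_zero_left]
    exact inner_self_eq_zero.mp hip
  have hQw : Q (χ h₀) = χ h₀ := by rw [hQx, hPw, sub_zero]
  have hPRw : P (R (χ h₀)) = 0 := by
    have h := hZw
    rw [hZapp, hQw, hPw, map_zero, map_zero, add_zero] at h
    exact h
  have hEw : E (χ h₀) = R (χ h₀) := by
    rw [hEapp, hQw, hQx (R (χ h₀)), hPRw, sub_zero]
  have hE2w : E (E (χ h₀)) = χ h₀ := by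
    rw [hEw, hEapp, hQx (R (χ h₀)), hPRw, sub_zero, hRR, hQw]
  -- properties of y
  have hQE : ∀ t, Q (E t) = E t := fun t => by rw [hEapp, hQQ]
  have hQy : Q y = y := by
    conv_lhs => rw [← hE2y]
    rw [hQE, hE2y]
  have hPy : P y = 0 := by rw [hPz, hQy, sub_self]
  have hEyQR : E y = Q (R y) := by rw [hEapp, hQy]
  have hnormEy : ‖E y‖ ^ 2 = ‖y‖ ^ 2 := by
    rw [← inner_self_eq_norm_sq (𝕜 := ℂ), ← inner_self_eq_norm_sq (𝕜 := ℂ) y, hEsym, hE2y]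
  have hPRy : P (R y) = 0 := by
    have hp := hpyth (R y)
    rw [hRiso, ← hEyQR, hnormEy] at hp
    have h1 : ‖P (R y)‖ ^ 2 = 0 := by linarith
    exact norm_eq_zero.mp (pow_eq_zero_iff two_ne_zero |>.mp h1)
  have hZy : Z y = 0 := by rw [hZapp, hQy, hPy, map_zero, map_zero, add_zero, hPRy]
  have hyrange : y ∈ LinearMap.range (χ : H →ₗ[ℂ] H) := by
    rw [hχrange]; exact LinearMap.mem_ker.mpr hZy
  -- orthogonality relations
  have hfix_pow : ∀ z : H, E (E z) = z → ∀ k, (E ^ (2*k)) z = z := by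
    intro z hz k
    induction k with
    | zero => simp
    | succ k ih =>
      rw [show 2*(k+1) = 2*k+1+1 by ring, pow_succ, ContinuousLinearMap.mul_apply,
        pow_succ, ContinuousLinearMap.mul_apply, hz, ih]
  have hperp : ∀ z : H, E (E z) = z → (inner ℂ (h₀ - y) z : ℂ) = 0 := by
    intro z hz
    have hconst : ∀ k, (inner ℂ (a k) z : ℂ) = inner ℂ h₀ z := by
      intro k
      calc (inner ℂ (a k) z : ℂ) = inner ℂ h₀ ((E ^ (2*k)) z) := hEpowsym _ _ _
        _ = inner ℂ h₀ z := by rw [hfix_pow z hz k]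
    have t1 : Tendsto (fun k => (inner ℂ (a k) z : ℂ)) atTop (𝓝 (inner ℂ y z)) :=
      hy.inner tendsto_const_nhds
    rw [funext hconst] at t1
    have huniq : (inner ℂ y z : ℂ) = inner ℂ h₀ z := tendsto_nhds_unique t1 tendsto_const_nhds
    rw [inner_sub_left, huniq, sub_self]
  have hwperp : ∀ v, v ∈ LinearMap.range (χ : H →ₗ[ℂ] H) → (inner ℂ (h₀ - χ h₀) v : ℂ) = 0 := by
    rintro v ⟨u, rfl⟩
    calc (inner ℂ (h₀ - χ h₀) (χ u) : ℂ) = inner ℂ (χ (h₀ - χ h₀)) u := (hχsym _ _).symm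
      _ = inner ℂ ((0 : H)) u := by rw [map_sub, hχχ, sub_self]
      _ = 0 := inner_zero_left _
  have hyw : y = χ h₀ := by
    have hmemsub : y - χ h₀ ∈ LinearMap.range (χ : H →ₗ[ℂ] H) :=
      Submodule.sub_mem _ hyrange ⟨h₀, rfl⟩
    have hfixsub : E (E (y - χ h₀)) = y - χ h₀ := by
      rw [map_sub, map_sub, hE2y, hE2w]
    have e1 : (inner ℂ (h₀ - y) (y - χ h₀) : ℂ) = 0 := hperp _ hfixsub
    have e2 : (inner ℂ (h₀ - χ h₀) (y - χ h₀) : ℂ) = 0 := hwperp _ hmemsub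
    have hz : (inner ℂ (y - χ h₀) (y - χ h₀) : ℂ) = 0 := by
      nth_rewrite 1 [show y - χ h₀ = (h₀ - χ h₀) - (h₀ - y) by abel]
      rw [inner_sub_left, e1, e2, sub_zero]
    exact sub_eq_zero.mp (inner_self_eq_zero.mp hz)
  -- final assembly
  have hfun : (fun k : ℕ => Q (R (s k))) = fun k => E (a k) := by
    funext k
    rw [(key k).1]
    show (E ^ (2*k+1)) h₀ = E ((E ^ (2*k)) h₀)
    rw [pow_succ', ContinuousLinearMap.mul_apply]
  have hEy_lim : Tendsto (fun k => E (a k)) atTop (𝓝 (R (χ h₀))) := by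
    have hcomp := (E.continuous.tendsto y).comp hy
    have h2 : E y = R (χ h₀) := by rw [hyw, hEw]
    rw [← h2]
    simpa [Function.comp_def] using hcomp
  refine ⟨?_, ?_, ?_⟩
  · show Tendsto (fun k : ℕ => Q (R (s k))) atTop (𝓝 (R (χ h₀)))
    rw [hfun]; exact hEy_lim
  · show Antitone (fun k : ℕ => ‖Q (R (s k))‖)
    have hfun2 : (fun k : ℕ => ‖Q (R (s k))‖) = fun k => c (2*k+1) := by
      funext k; rw [(key k).1]
    rw [hfun2]
    intro i j hij
    exact hc_anti (by omega)
  · show Tendsto (fun k : ℕ => ‖Q (R (s k))‖) atTop (𝓝 ‖χ h₀‖)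
    have hfun2 : (fun k : ℕ => ‖Q (R (s k))‖) = fun k => ‖E (a k)‖ :=
      funext fun k => by rw [congrFun hfun k]
    rw [hfun2, ← hRiso (χ h₀)]
    exact hEy_lim.norm
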